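/- Let C_n be the cycle on n vertices where n is divisible by 6 and n ≥ 6. The minimum number of edge deletions turning C_n into a starforest is n/3, and every deletion set of size n/3 achieving this deletes exactly every third consecutive edge of the cycle (so there are exactly 3 such optimal deletion sets). -/

import Mathlib

open SimpleGraph

/-- The graph obtained from `G` by toggling (adding/deleting) the edges in `F`. -/
def editedGraph {V : Type*} (G : SimpleGraph V) (F : Set (Sym2 V)) : SimpleGraph V :=
  SimpleGraph.fromEdgeSet (symmDiff G.edgeSet F)

/-- A graph is a starforest: every connected component is a star, i.e. has a center
adjacent to all other vertices of the component, the non-center vertices being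
pairwise non-adjacent. -/
def IsStarGraph {V : Type*} (H : SimpleGraph V) : Prop :=
  ∀ c : H.ConnectedComponent, ∃ ctr ∈ c.supp,
    (∀ v ∈ c.supp, v ≠ ctr → H.Adj ctr v) ∧
    (∀ u ∈ c.supp, ∀ v ∈ c.supp, u ≠ ctr → v ≠ ctr → ¬ H.Adj u v)

/-- A graph is a disjoint union of complete `t`-partite graphs: there is a colouring
with at most `t` colours such that two distinct vertices in the same connected
component are adjacent iff they get different colours. -/
def IsTPartiteCluster {V : Type*} (t : ℕ) (H : SimpleGraph V) : Prop :=
  ∃ f : V → Fin t, ∀ u v : V, u ≠ v → H.Reachable u v → (H.Adj u v ↔ f u ≠ f v)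


namespace CycleStarAux

open Fin.NatCast Fin.CommRing

variable {n : ℕ}

/-- The `i`-th edge of the cycle. -/
def E [NeZero n] (i : Fin n) : Sym2 (Fin n) := s(i, i + 1)

lemma val_one' [NeZero n] (hn : 2 ≤ n) : ((1 : Fin n) : ℕ) = 1 := by
  rw [Fin.val_one']; exact Nat.mod_eq_of_lt (by omega)

lemma val_succ [NeZero n] (hn : 2 ≤ n) (i : Fin n) :
    ((i + 1 : Fin n) : ℕ) = ((i : ℕ) + 1) % n := by
  rw [Fin.val_add, val_one' hn]

lemma succ_ne [NeZero n] (hn : 2 ≤ n) (i : Fin n) : i + 1 ≠ i := by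
  intro h
  have := congrArg Fin.val h
  rw [val_succ hn] at this
  rcases Nat.lt_or_ge ((i : ℕ) + 1) n with h' | h'
  · rw [Nat.mod_eq_of_lt h'] at this; omega
  · have h1 : (i:ℕ) + 1 = n := by have := i.isLt; omega
    rw [h1, Nat.mod_self] at this
    have := i.isLt; omega

lemma adj_iff [NeZero n] (hn : 2 ≤ n) (u v : Fin n) :
    (cycleGraph n).Adj u v ↔ v = u + 1 ∨ u = v + 1 := by
  rw [cycleGraph_adj']
  constructor
  · rintro (h | h)
    · right
      have : u - v = 1 := by ext; rw [val_one' hn]; exact h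
      rw [← this]; ring
    · left
      have : v - u = 1 := by ext; rw [val_one' hn]; exact h
      rw [← this]; ring
  · rintro (rfl | rfl)
    · right; rw [add_sub_cancel_left, val_one' hn]
    · left; rw [add_sub_cancel_left, val_one' hn]

lemma E_inj [NeZero n] (hn : 3 ≤ n) : Function.Injective (E (n := n)) := by
  intro i j h
  rw [E, E, Sym2.eq, Sym2.rel_iff'] at h
  rcases h with h | h
  · exact (Prod.mk.injEq .. ▸ h).1
  · obtain ⟨h1, h2⟩ := Prod.mk.injEq .. ▸ h
    -- i = j + 1 and i + 1 = j : then i = i + 1 + 1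
    exfalso
    subst h1
    have : j = j + 1 + 1 := by rw [h2]
    have hne : j + 1 + 1 ≠ j := by
      intro hh
      have hv := congrArg Fin.val hh
      rw [val_succ (by omega), val_succ (by omega)] at hv
      rcases Nat.lt_or_ge ((j:ℕ) + 1) n with h' | h'
      · rw [Nat.mod_eq_of_lt h'] at hv
        rcases Nat.lt_or_ge ((j:ℕ) + 2) n with h'' | h''
        · rw [Nat.mod_eq_of_lt h''] at hv; omega
        · have : (j:ℕ) + 2 = n := by omega
          rw [this, Nat.mod_self] at hv; omega
      · have : (j:ℕ) + 1 = n := by omega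
        rw [this, Nat.mod_self, Nat.mod_eq_of_lt (by omega)] at hv
        omega
    exact hne this.symm

lemma mem_edgeSet [NeZero n] (hn : 2 ≤ n) (e : Sym2 (Fin n)) :
    e ∈ (cycleGraph n).edgeSet ↔ ∃ i, e = E i := by
  induction e with
  | _ u v =>
    rw [SimpleGraph.mem_edgeSet, adj_iff hn]
    constructor
    · rintro (rfl | rfl)
      · exact ⟨u, rfl⟩
      · exact ⟨v, Sym2.eq_swap⟩
    · rintro ⟨i, hi⟩
      rw [E, Sym2.eq, Sym2.rel_iff'] at hi
      rcases hi with h | h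
      · obtain ⟨h1, h2⟩ := Prod.mk.injEq .. ▸ h
        subst h1; subst h2; left; rfl
      · obtain ⟨h1, h2⟩ := Prod.mk.injEq .. ▸ h
        subst h1; subst h2; right; rfl

end CycleStarAux
namespace CycleStarAux2

/-- In a star forest there are no two vertex-disjoint edges within one component. -/
lemma no_two_edges {V : Type*} {H : SimpleGraph V}
    (hH : ∀ c : H.ConnectedComponent, ∃ ctr ∈ c.supp,
      (∀ v ∈ c.supp, v ≠ ctr → H.Adj ctr v) ∧
      (∀ u ∈ c.supp, ∀ v ∈ c.supp, u ≠ ctr → v ≠ ctr → ¬ H.Adj u v))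
    {a b c d : V} (hab : H.Adj a b) (hcd : H.Adj c d) (hr : H.Reachable a c)
    (h1 : a ≠ c) (h2 : a ≠ d) (h3 : b ≠ c) (h4 : b ≠ d) : False := by
  obtain ⟨ctr, hctr, hs1, hs2⟩ := hH (H.connectedComponentMk a)
  have ha : a ∈ (H.connectedComponentMk a).supp := by
    rw [SimpleGraph.ConnectedComponent.mem_supp_iff]
  have hb : b ∈ (H.connectedComponentMk a).supp := by
    rw [SimpleGraph.ConnectedComponent.mem_supp_iff, SimpleGraph.ConnectedComponent.eq]
    exact hab.symm.reachable
  have hc : c ∈ (H.connectedComponentMk a).supp := by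
    rw [SimpleGraph.ConnectedComponent.mem_supp_iff, SimpleGraph.ConnectedComponent.eq]
    exact hr.symm
  have hd : d ∈ (H.connectedComponentMk a).supp := by
    rw [SimpleGraph.ConnectedComponent.mem_supp_iff, SimpleGraph.ConnectedComponent.eq]
    exact (hcd.symm.reachable).trans hr.symm
  by_cases hactr : a = ctr
  · subst hactr
    exact hs2 c hc d hd (Ne.symm h1) (Ne.symm h2) hcd
  · by_cases hbctr : b = ctr
    · subst hbctr
      exact hs2 c hc d hd (Ne.symm h3) (Ne.symm h4) hcd
    · exact hs2 a ha b hb hactr hbctr hab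

end CycleStarAux2

namespace CycleStarCount

open Fin.NatCast Fin.CommRing

variable {n : ℕ}

lemma val3_succ [NeZero n] (hn : 6 ≤ n) (h3 : 3 ∣ n) (i : Fin n) :
    ((i + 1 : Fin n) : ℕ) % 3 = ((i : ℕ) + 1) % 3 := by
  rw [CycleStarAux.val_succ (by omega) i, Nat.mod_mod_of_dvd _ h3]

/-- `j ↦ a + 3*j` -/
def ψ [NeZero n] (a : Fin n) (j : Fin (n / 3)) : Fin n := a + ((3 * (j : ℕ) : ℕ) : Fin n)

lemma ψ_val [NeZero n] (h3 : 3 ∣ n) (a : Fin n) (j : Fin (n / 3)) :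
    (ψ a j : ℕ) = ((a : ℕ) + 3 * (j : ℕ)) % n := by
  have h1 : 3 * (j : ℕ) < n := by
    have := j.isLt
    omega
  rw [ψ, Fin.val_add, Fin.val_natCast, Nat.mod_eq_of_lt h1]

lemma ψ_val3 [NeZero n] (h3 : 3 ∣ n) (a : Fin n) (j : Fin (n / 3)) :
    (ψ a j : ℕ) % 3 = (a : ℕ) % 3 := by
  rw [ψ_val h3, Nat.mod_mod_of_dvd _ h3, Nat.add_mul_mod_self_left]

lemma ψ_inj [NeZero n] (h3 : 3 ∣ n) (a : Fin n) : Function.Injective (ψ a) := by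
  intro j k h
  have hv := congrArg Fin.val h
  rw [ψ_val h3, ψ_val h3] at hv
  have hj := j.isLt; have hk := k.isLt
  have h1 : (a : ℕ) + 3 * (j : ℕ) < 2 * n := by have := a.isLt; omega
  have h2 : (a : ℕ) + 3 * (k : ℕ) < 2 * n := by have := a.isLt; omega
  have e1 := Nat.div_add_mod ((a : ℕ) + 3 * (j : ℕ)) n
  have e2 := Nat.div_add_mod ((a : ℕ) + 3 * (k : ℕ)) n
  have d1 : ((a : ℕ) + 3 * (j : ℕ)) / n < 2 := Nat.div_lt_of_lt_mul (by omega)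
  have d2 : ((a : ℕ) + 3 * (k : ℕ)) / n < 2 := Nat.div_lt_of_lt_mul (by omega)
  have : (j : ℕ) = (k : ℕ) := by
    interval_cases h : ((a : ℕ) + 3 * (j : ℕ)) / n <;> interval_cases h' : ((a : ℕ) + 3 * (k : ℕ)) / n <;> omega
  exact Fin.ext this

/-- decomposition of `i - a` -/
lemma ψ_surj [NeZero n] (h3 : 3 ∣ n) (a i : Fin n) (h : (i : ℕ) % 3 = (a : ℕ) % 3) :
    ∃ j, ψ a j = i := by
  set d : Fin n := i - a with hd
  have hid : a + d = i := by rw [hd]; ring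
  have hv : ((a : ℕ) + (d : ℕ)) % n = (i : ℕ) := by
    rw [← Fin.val_add, hid]
  have hcase : (a : ℕ) + (d : ℕ) = (i : ℕ) ∨ (a : ℕ) + (d : ℕ) = (i : ℕ) + n := by
    rcases Nat.lt_or_ge ((a : ℕ) + (d : ℕ)) n with h' | h'
    · left; rw [← hv, Nat.mod_eq_of_lt h']
    · right
      have hlt : (a : ℕ) + (d : ℕ) - n < n := by have := a.isLt; have := d.isLt; omega
      have : ((a : ℕ) + (d : ℕ)) % n = (a : ℕ) + (d : ℕ) - n := by
        rw [Nat.mod_eq_sub_mod h', Nat.mod_eq_of_lt hlt]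
      omega
  have hdvd : 3 ∣ (d : ℕ) := by omega
  refine ⟨⟨(d : ℕ) / 3, by have := d.isLt; omega⟩, ?_⟩
  have : ((3 * ((d : ℕ) / 3) : ℕ) : Fin n) = d := by
    have h33 : 3 * ((d : ℕ) / 3) = (d : ℕ) := by omega
    rw [h33, Fin.cast_val_eq_self]
  rw [ψ]
  simp only
  rw [this, hid]

end CycleStarCount

namespace CycleStarCount

open Fin.NatCast Fin.CommRing

variable {n : ℕ}

lemma one_le₃ {x y z : ℕ} (h : x = 1 ∨ y = 1 ∨ z = 1) : 1 ≤ x + y + z := by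
  rcases h with rfl | rfl | rfl <;> omega

lemma sum_indicator [NeZero n] (T : Finset (Fin n)) :
    ∑ i : Fin n, (if i ∈ T then (1 : ℕ) else 0) = T.card := by
  rw [Finset.sum_ite_mem, Finset.univ_inter, Finset.sum_const, smul_eq_mul, mul_one]

lemma sum_shift [NeZero n] (T : Finset (Fin n)) (c : Fin n) :
    ∑ i : Fin n, (if i + c ∈ T then (1 : ℕ) else 0) = T.card := by
  rw [← sum_indicator T]
  exact Equiv.sum_comp (Equiv.addRight c) (fun x => if x ∈ T then (1 : ℕ) else 0)

lemma sum_blocks [NeZero n] (T : Finset (Fin n)) :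
    ∑ i : Fin n, ((if i ∈ T then (1 : ℕ) else 0) + (if i + 1 ∈ T then (1 : ℕ) else 0)
      + (if i + 1 + 1 ∈ T then (1 : ℕ) else 0)) = 3 * T.card := by
  rw [Finset.sum_add_distrib, Finset.sum_add_distrib, sum_indicator, sum_shift]
  have : ∀ i : Fin n, i + 1 + 1 = i + (1 + 1) := fun i => by ring
  simp_rw [this]
  rw [sum_shift]
  ring

lemma count_lower [NeZero n] (hn : 6 ≤ n) (h3 : 3 ∣ n) (T : Finset (Fin n))
    (hP : ∀ i : Fin n, i ∈ T ∨ i + 1 ∈ T ∨ i + 1 + 1 ∈ T) : n / 3 ≤ T.card := by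
  have hb : ∀ i : Fin n, 1 ≤ (if i ∈ T then (1 : ℕ) else 0) + (if i + 1 ∈ T then (1 : ℕ) else 0)
      + (if i + 1 + 1 ∈ T then (1 : ℕ) else 0) := by
    intro i
    refine one_le₃ ?_
    rcases hP i with h | h | h
    exacts [Or.inl (if_pos h), Or.inr (Or.inl (if_pos h)), Or.inr (Or.inr (if_pos h))]
  have := Finset.card_nsmul_le_sum Finset.univ
    (fun i : Fin n => (if i ∈ T then (1 : ℕ) else 0) + (if i + 1 ∈ T then (1 : ℕ) else 0)
      + (if i + 1 + 1 ∈ T then (1 : ℕ) else 0)) 1 (fun i _ => hb i)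
  rw [sum_blocks] at this
  simp only [Finset.card_univ, Fintype.card_fin, smul_eq_mul, mul_one] at this
  omega

lemma count_eq [NeZero n] (hn : 6 ≤ n) (h3 : 3 ∣ n) (T : Finset (Fin n))
    (hP : ∀ i : Fin n, i ∈ T ∨ i + 1 ∈ T ∨ i + 1 + 1 ∈ T) (hcard : T.card = n / 3) :
    ∃ r : ℕ, r < 3 ∧ ∀ i : Fin n, i ∈ T ↔ (i : ℕ) % 3 = r := by
  set f : Fin n → ℕ := fun i => if i ∈ T then (1 : ℕ) else 0 with hf
  set b : Fin n → ℕ := fun i => f i + f (i + 1) + f (i + 1 + 1) with hbdef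
  have hsum : ∑ i : Fin n, b i = n := by
    rw [hbdef]
    simp only [hf]
    rw [sum_blocks, hcard]
    omega
  have hb1 : ∀ i : Fin n, 1 ≤ b i := by
    intro i
    refine one_le₃ ?_
    rcases hP i with h | h | h
    exacts [Or.inl (if_pos h), Or.inr (Or.inl (if_pos h)), Or.inr (Or.inr (if_pos h))]
  have hone : ∀ i : Fin n, b i = 1 := by
    by_contra h
    push_neg at h
    obtain ⟨i₀, hi₀⟩ := h
    have h2 : 2 ≤ b i₀ := by have := hb1 i₀; omega
    have herase : (Finset.univ.erase i₀).card • 1 ≤ ∑ i ∈ Finset.univ.erase i₀, b i :=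
      Finset.card_nsmul_le_sum _ _ _ (fun i _ => hb1 i)
    have hcnt : (Finset.univ.erase i₀).card = n - 1 := by
      rw [Finset.card_erase_of_mem (Finset.mem_univ i₀), Finset.card_univ, Fintype.card_fin]
    have htot : b i₀ + ∑ i ∈ Finset.univ.erase i₀, b i = n := by
      rw [Finset.add_sum_erase _ _ (Finset.mem_univ i₀), hsum]
    rw [hcnt, smul_eq_mul, mul_one] at herase
    omega
  have hstep : ∀ i : Fin n, i ∈ T → i + 1 + 1 + 1 ∈ T := by
    intro i hi
    have h0 := hone i
    have h1 := hone (i + 1)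
    simp only [hbdef, hf] at h0 h1
    by_cases hc : i + 1 + 1 + 1 ∈ T
    · exact hc
    exfalso
    by_cases ha : i + 1 ∈ T <;> by_cases hb2 : i + 1 + 1 ∈ T <;>
      simp [hi, hc, ha, hb2] at h0 h1
  have hiter : ∀ k : ℕ, ∀ i : Fin n, i ∈ T → i + ((3 * k : ℕ) : Fin n) ∈ T := by
    intro k
    induction k with
    | zero => intro i hi; simpa using hi
    | succ k ih =>
      intro i hi
      have h1 : ((3 * (k + 1) : ℕ) : Fin n) = ((3 * k : ℕ) : Fin n) + 1 + 1 + 1 := by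
        push_cast; ring
      rw [h1, ← add_assoc, ← add_assoc, ← add_assoc]
      exact hstep _ (ih i hi)
  obtain ⟨s₀, hs₀⟩ : ∃ s, s ∈ T := by
    rcases hP 0 with h | h | h
    exacts [⟨_, h⟩, ⟨_, h⟩, ⟨_, h⟩]
  have hbwd : ∀ i : Fin n, (i : ℕ) % 3 = (s₀ : ℕ) % 3 → i ∈ T := by
    intro i hi
    obtain ⟨j, hj⟩ := ψ_surj h3 s₀ i hi
    have := hiter (j : ℕ) s₀ hs₀
    rwa [show s₀ + ((3 * (j : ℕ) : ℕ) : Fin n) = ψ s₀ j from rfl, hj] at this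
  refine ⟨(s₀ : ℕ) % 3, by omega, fun i => ⟨?_, hbwd i⟩⟩
  intro hi
  by_contra hne
  have hsub : ∀ a : Fin n, a ∈ T → Finset.image (ψ a) Finset.univ ⊆ T := by
    intro a ha x hx
    simp only [Finset.mem_image, Finset.mem_univ, true_and] at hx
    obtain ⟨j, rfl⟩ := hx
    exact hiter (j : ℕ) a ha
  have hdisj : Disjoint (Finset.image (ψ s₀) Finset.univ) (Finset.image (ψ i) Finset.univ) := by
    rw [Finset.disjoint_left]
    intro x hx hx'
    simp only [Finset.mem_image, Finset.mem_univ, true_and] at hx hx'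
    obtain ⟨j, rfl⟩ := hx
    obtain ⟨k, hk⟩ := hx'
    have e1 := ψ_val3 h3 s₀ j
    have e2 := ψ_val3 h3 i k
    rw [hk] at e2
    omega
  have hcup : (Finset.image (ψ s₀) Finset.univ ∪ Finset.image (ψ i) Finset.univ).card ≤ T.card :=
    Finset.card_le_card (Finset.union_subset (hsub s₀ hs₀) (hsub i hi))
  rw [Finset.card_union_of_disjoint hdisj,
    Finset.card_image_of_injective _ (ψ_inj h3 s₀),
    Finset.card_image_of_injective _ (ψ_inj h3 i),
    Finset.card_univ, Fintype.card_fin, hcard] at hcup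
  omega

end CycleStarCount

namespace CycleStarGraph

open Fin.NatCast Fin.CommRing

open CycleStarAux CycleStarCount

variable {n : ℕ}

lemma add_two_ne [NeZero n] (hn : 6 ≤ n) (x : Fin n) : x + 1 + 1 ≠ x := by
  intro h
  have h' : x + (1 + 1) = x + 0 := by rw [← add_assoc, h, add_zero]
  have h2 : ((2 : ℕ) : Fin n) = 0 := by
    rw [show ((2 : ℕ) : Fin n) = 1 + 1 by push_cast; ring]; exact add_left_cancel h'
  have hv := congrArg Fin.val h2
  rw [Fin.val_natCast, Nat.mod_eq_of_lt (by omega)] at hv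
  simp at hv

lemma add_three_ne [NeZero n] (hn : 6 ≤ n) (x : Fin n) : x + 1 + 1 + 1 ≠ x := by
  intro h
  have h' : x + (1 + 1 + 1) = x + 0 := by rw [← add_assoc, ← add_assoc, h, add_zero]
  have h2 : ((3 : ℕ) : Fin n) = 0 := by
    rw [show ((3 : ℕ) : Fin n) = 1 + 1 + 1 by push_cast; ring]; exact add_left_cancel h'
  have hv := congrArg Fin.val h2
  rw [Fin.val_natCast, Nat.mod_eq_of_lt (by omega)] at hv
  simp at hv

lemma E_mem_image [NeZero n] {S : Set (Fin n)} (hn : 6 ≤ n) (u : Fin n) :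
    E u ∈ E '' S ↔ u ∈ S :=
  Function.Injective.mem_set_image (E_inj (by omega))

lemma adj_delete [NeZero n] {S : Set (Fin n)} (hn : 6 ≤ n) (u v : Fin n) :
    ((cycleGraph n).deleteEdges (E '' S)).Adj u v ↔
      (v = u + 1 ∧ u ∉ S) ∨ (u = v + 1 ∧ v ∉ S) := by
  rw [SimpleGraph.deleteEdges_adj, adj_iff (by omega)]
  constructor
  · rintro ⟨h | h, hmem⟩
    · subst h
      exact Or.inl ⟨rfl, fun hu => hmem ((E_mem_image hn u).2 hu)⟩
    · subst h
      refine Or.inr ⟨rfl, fun hv => hmem ?_⟩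
      rw [show s(v + 1, v) = E v from Sym2.eq_swap]
      exact (E_mem_image hn v).2 hv
  · rintro (⟨rfl, hu⟩ | ⟨rfl, hv⟩)
    · exact ⟨Or.inl rfl, fun hmem => hu ((E_mem_image hn u).1 hmem)⟩
    · refine ⟨Or.inr rfl, fun hmem => hv ((E_mem_image hn v).1 ?_)⟩
      rwa [show s(v + 1, v) = E v from Sym2.eq_swap] at hmem

lemma val3_pred [NeZero n] (hn : 6 ≤ n) (h3 : 3 ∣ n) (v : Fin n) :
    ((v - 1 : Fin n) : ℕ) % 3 = ((v : ℕ) + 2) % 3 := by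
  rw [Fin.sub_def]
  simp only
  rw [Nat.mod_mod_of_dvd _ h3, val_one' (by omega)]
  omega

lemma sub_one_add_one [NeZero n] (v : Fin n) : v - 1 + 1 = v := by ring

/-- center of the component of `v` after deleting every edge `E i` with `i % 3 = 0` -/
def ctrF [NeZero n] (v : Fin n) : Fin n :=
  if (v : ℕ) % 3 = 1 then v + 1 else if (v : ℕ) % 3 = 0 then v - 1 else v

def S0 (n : ℕ) : Set (Fin n) := {i | (i : ℕ) % 3 = 0}

section D0

variable [NeZero n] (hn : 6 ≤ n) (h3 : 3 ∣ n)

include hn h3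

lemma ctrF_adj {u v : Fin n} (h : ((cycleGraph n).deleteEdges (E '' (S0 n))).Adj u v) : ctrF u = ctrF v := by
  have key : ∀ w : Fin n, (w : ℕ) % 3 ≠ 0 → ctrF w = ctrF (w + 1) := by
    intro w hw
    have h2 : (w : ℕ) % 3 = 1 ∨ (w : ℕ) % 3 = 2 := by omega
    have hsucc := val3_succ (n := n) hn h3 w
    rcases h2 with h2 | h2
    · rw [ctrF, ctrF, if_pos h2, if_neg (by omega), if_neg (by omega)]
    · rw [ctrF, ctrF, if_neg (by omega), if_neg (by omega), if_neg (by omega),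
        if_pos (by omega), add_sub_cancel_right]
  rcases (adj_delete hn u v).1 h with ⟨rfl, hu⟩ | ⟨rfl, hv⟩
  · exact key u (by simpa [S0] using hu)
  · exact (key v (by simpa [S0] using hv)).symm

lemma ctrF_reach (v : Fin n) : ((cycleGraph n).deleteEdges (E '' (S0 n))).Reachable v (ctrF v) := by
  have h2 : (v : ℕ) % 3 = 0 ∨ (v : ℕ) % 3 = 1 ∨ (v : ℕ) % 3 = 2 := by omega
  rcases h2 with h2 | h2 | h2
  · rw [ctrF, if_neg (by omega), if_pos h2]
    have : ((cycleGraph n).deleteEdges (E '' (S0 n))).Adj v (v - 1) := by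
      rw [adj_delete hn]
      right
      refine ⟨(sub_one_add_one v).symm, ?_⟩
      simp only [S0, Set.mem_setOf_eq, val3_pred hn h3]
      omega
    exact this.reachable
  · rw [ctrF, if_pos h2]
    have : ((cycleGraph n).deleteEdges (E '' (S0 n))).Adj v (v + 1) := by
      rw [adj_delete hn]
      exact Or.inl ⟨rfl, by simp only [S0, Set.mem_setOf_eq]; omega⟩
    exact this.reachable
  · rw [ctrF, if_neg (by omega), if_neg (by omega)]

lemma ctrF_of_reach {u v : Fin n} (h : ((cycleGraph n).deleteEdges (E '' (S0 n))).Reachable u v) : ctrF u = ctrF v := by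
  obtain ⟨w⟩ := h
  induction w with
  | nil => rfl
  | cons ha _ ih => exact (ctrF_adj hn h3 ha).trans ih

lemma star0 :
    ∀ c : ((cycleGraph n).deleteEdges (E '' (S0 n))).ConnectedComponent, ∃ ctr ∈ c.supp,
      (∀ v ∈ c.supp, v ≠ ctr → ((cycleGraph n).deleteEdges (E '' (S0 n))).Adj ctr v) ∧
      (∀ u ∈ c.supp, ∀ v ∈ c.supp, u ≠ ctr → v ≠ ctr → ¬ ((cycleGraph n).deleteEdges (E '' (S0 n))).Adj u v) := by
  refine SimpleGraph.ConnectedComponent.ind (fun v => ?_)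
  have hsupp : ∀ u : Fin n, u ∈ (((cycleGraph n).deleteEdges (E '' (S0 n))).connectedComponentMk v).supp ↔ ((cycleGraph n).deleteEdges (E '' (S0 n))).Reachable u v := by
    intro u
    rw [SimpleGraph.ConnectedComponent.mem_supp_iff, SimpleGraph.ConnectedComponent.eq]
  refine ⟨ctrF v, (hsupp _).2 (ctrF_reach hn h3 v).symm, ?_, ?_⟩
  · intro w hw hne
    have hww : ctrF w = ctrF v := ctrF_of_reach hn h3 ((hsupp w).1 hw)
    have h2 : (w : ℕ) % 3 = 0 ∨ (w : ℕ) % 3 = 1 ∨ (w : ℕ) % 3 = 2 := by omega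
    rcases h2 with h2 | h2 | h2
    · rw [ctrF, if_neg (by omega), if_pos h2] at hww
      rw [← hww]
      rw [adj_delete hn]
      left
      refine ⟨(sub_one_add_one w).symm, ?_⟩
      simp only [S0, Set.mem_setOf_eq, val3_pred hn h3]
      omega
    · rw [ctrF, if_pos h2] at hww
      rw [← hww]
      rw [adj_delete hn]
      right
      exact ⟨rfl, by simp only [S0, Set.mem_setOf_eq]; omega⟩
    · rw [ctrF, if_neg (by omega), if_neg (by omega)] at hww
      exact absurd hww hne
  · intro u hu w hw hu' hw' hadj
    have huv : ctrF u = ctrF v := ctrF_of_reach hn h3 ((hsupp u).1 hu)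
    have hwv : ctrF w = ctrF v := ctrF_of_reach hn h3 ((hsupp w).1 hw)
    rcases (adj_delete hn u w).1 hadj with ⟨rfl, hmem⟩ | ⟨rfl, hmem⟩
    · simp only [S0, Set.mem_setOf_eq] at hmem
      have h2 : (u : ℕ) % 3 = 1 ∨ (u : ℕ) % 3 = 2 := by omega
      rcases h2 with h2 | h2
      · rw [ctrF, if_pos h2] at huv
        exact hw' huv
      · rw [ctrF, if_neg (by omega), if_neg (by omega)] at huv
        exact hu' huv
    · simp only [S0, Set.mem_setOf_eq] at hmem
      have h2 : (w : ℕ) % 3 = 1 ∨ (w : ℕ) % 3 = 2 := by omega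
      rcases h2 with h2 | h2
      · rw [ctrF, if_pos h2] at hwv
        exact hu' hwv
      · rw [ctrF, if_neg (by omega), if_neg (by omega)] at hwv
        exact hw' hwv

end D0

end CycleStarGraph

open CycleStarAux CycleStarAux2 CycleStarCount CycleStarGraph in
/-- For a cycle of length `n` divisible by 6, the minimum number of edge deletions
producing a starforest is `n/3`, and every optimal deletion set consists of every
third consecutive edge of the cycle (the edges `e_i = {i, i+1}` with `i ≡ r (mod 3)`
for some `r < 3`). -/
theorem cycle_starforest_deletion (n : ℕ) (hn : 6 ≤ n) (hdvd : 6 ∣ n) :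
    IsLeast
      {m : ℕ | ∃ D : Set (Sym2 (Fin n)), D ⊆ (SimpleGraph.cycleGraph n).edgeSet ∧
        D.ncard = m ∧ IsStarGraph ((SimpleGraph.cycleGraph n).deleteEdges D)}
      (n / 3) ∧
    ∀ D : Set (Sym2 (Fin n)), D ⊆ (SimpleGraph.cycleGraph n).edgeSet →
      IsStarGraph ((SimpleGraph.cycleGraph n).deleteEdges D) → D.ncard = n / 3 →
      ∃ r : ℕ, r < 3 ∧
        D = {e | ∃ i : Fin n, (i : ℕ) % 3 = r ∧
          e = s(i, i + (⟨1, by omega⟩ : Fin n))} := by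
  haveI : NeZero n := ⟨by omega⟩
  have h3 : 3 ∣ n := by omega
  have hn2 : 2 ≤ n := by omega
  have hDfact : ∀ D : Set (Sym2 (Fin n)), D ⊆ (cycleGraph n).edgeSet →
      D = E '' {i : Fin n | E i ∈ D} := by
    intro D hD
    ext e
    constructor
    · intro he
      obtain ⟨i, rfl⟩ := (mem_edgeSet hn2 e).1 (hD he)
      exact ⟨i, he, rfl⟩
    · rintro ⟨i, hi, rfl⟩; exact hi
  have hP : ∀ D : Set (Sym2 (Fin n)), D ⊆ (cycleGraph n).edgeSet →
      IsStarGraph ((cycleGraph n).deleteEdges D) →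
      ∀ i : Fin n, E i ∈ D ∨ E (i + 1) ∈ D ∨ E (i + 1 + 1) ∈ D := by
    intro D hD hstar i
    by_contra hcon
    push_neg at hcon
    obtain ⟨h0, h1, h2⟩ := hcon
    rw [hDfact D hD] at hstar
    have hab : ((cycleGraph n).deleteEdges (E '' {i : Fin n | E i ∈ D})).Adj (i + 1) i := by
      rw [adj_delete hn]; right; exact ⟨rfl, h0⟩
    have hcd : ((cycleGraph n).deleteEdges (E '' {i : Fin n | E i ∈ D})).Adj (i + 1 + 1)
        (i + 1 + 1 + 1) := by
      rw [adj_delete hn]; left; exact ⟨rfl, h2⟩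
    have hbc : ((cycleGraph n).deleteEdges (E '' {i : Fin n | E i ∈ D})).Adj (i + 1)
        (i + 1 + 1) := by
      rw [adj_delete hn]; left; exact ⟨rfl, h1⟩
    exact no_two_edges hstar hab hcd hbc.reachable
      (succ_ne hn2 (i + 1)).symm (add_two_ne hn (i + 1)).symm
      (add_two_ne hn i).symm (add_three_ne hn i).symm
  refine ⟨⟨⟨E '' S0 n, ?_, ?_, ?_⟩, ?_⟩, ?_⟩
  · rintro e ⟨i, -, rfl⟩
    exact (mem_edgeSet hn2 _).2 ⟨i, rfl⟩
  · rw [Set.ncard_image_of_injective _ (E_inj (by omega))]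
    have hrange : S0 n = Set.range (ψ (0 : Fin n)) := by
      ext i
      simp only [S0, Set.mem_setOf_eq, Set.mem_range]
      constructor
      · intro h
        exact ψ_surj h3 0 i (by simp [h])
      · rintro ⟨j, rfl⟩
        have := ψ_val3 h3 0 j
        simpa using this
    rw [hrange, ← Nat.card_coe_set_eq, Nat.card_range_of_injective (ψ_inj h3 0),
      Nat.card_eq_fintype_card, Fintype.card_fin]
  · exact star0 hn h3
  · rintro m ⟨D, hD, rfl, hstar⟩
    have hPD := hP D hD hstar
    rw [hDfact D hD, Set.ncard_image_of_injective _ (E_inj (by omega))]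
    have hfin : ({i : Fin n | E i ∈ D}).Finite := Set.toFinite _
    rw [Set.ncard_eq_toFinset_card _ hfin]
    refine count_lower hn h3 hfin.toFinset ?_
    intro i
    simpa [Set.Finite.mem_toFinset] using hPD i
  · intro D hD hstar hcard
    have hPD := hP D hD hstar
    have hfin : ({i : Fin n | E i ∈ D}).Finite := Set.toFinite _
    have hTcard : hfin.toFinset.card = n / 3 := by
      rw [← Set.ncard_eq_toFinset_card _ hfin,
        ← Set.ncard_image_of_injective _ (E_inj (show (3:ℕ) ≤ n by omega)),
        ← hDfact D hD, hcard]
    obtain ⟨r, hr, hiff⟩ := count_eq hn h3 hfin.toFinset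
      (by intro i; simpa [Set.Finite.mem_toFinset] using hPD i) hTcard
    refine ⟨r, hr, ?_⟩
    have hone1 : (⟨1, by omega⟩ : Fin n) = 1 := by
      apply Fin.ext
      rw [val_one' hn2]
    rw [hDfact D hD]
    ext e
    simp only [Set.mem_image, Set.mem_setOf_eq, hone1]
    constructor
    · rintro ⟨i, hi, rfl⟩
      have hm := (hiff i).1 (by simpa [Set.Finite.mem_toFinset] using hi)
      exact ⟨i, hm, rfl⟩
    · rintro ⟨i, hmod, rfl⟩
      have hm := (hiff i).2 hmod
      rw [Set.Finite.mem_toFinset] at hm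
      exact ⟨i, hm, rfl⟩
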